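/- arXiv:2305.18162 — 4 statements merged into one kernel-verified Lean document; each statement's English description precedes it below -/
import Mathlib

section
/- Let R > 0, let m ≥ 1 be an integer, and let v : [0,R] → ℝ satisfy Assumption 1.1. Then there exist constants C₀ > 0 and δ₀ > 0 such that for every λ ∈ ℝ and every δ ∈ (0, δ₀] there is a finite family of closed intervals V₁, …, V_N ⊆ [0,R] with E_{λ,δ} ⊆ V₁ ∪ ⋯ ∪ V_N and Σ_{i=1}^N |V_i| < C₀ δ, where |V_i| denotes the length of the interval V_i. -/
open MeasureTheory

set_option maxHeartbeats 1000000

noncomputable section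

/-- Assumption 1.1: `v` is `Cᵐ` on `[0,R]` and its first `m` derivatives
do not vanish simultaneously. -/
def GoodProfile (R : ℝ) (m : ℕ) (v : ℝ → ℝ) : Prop :=
  ContDiffOn ℝ m v (Set.Icc 0 R) ∧
    ∀ r ∈ Set.Icc (0 : ℝ) R, ∑ n ∈ Finset.Icc 1 m, |iteratedDerivWithin n v (Set.Icc 0 R) r| ≠ 0

/-- `E'_{λ,δ} = {r ∈ [0,R] : |v(r) - λ| < δ^m}`. -/
def Eset' (R : ℝ) (m : ℕ) (v : ℝ → ℝ) (lam δ : ℝ) : Set ℝ :=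
  {r ∈ Set.Icc (0 : ℝ) R | |v r - lam| < δ ^ m}

/-- `E_{λ,δ} = {r ∈ [0,R] : dist(r, E'_{λ,δ}) < δ^m}`. -/
def Eset (R : ℝ) (m : ℕ) (v : ℝ → ℝ) (lam δ : ℝ) : Set ℝ :=
  {r ∈ Set.Icc (0 : ℝ) R |
    EMetric.infEdist r (Eset' R m v lam δ) < ENNReal.ofReal (δ ^ m)}

section Helpers

open Set


lemma mono_of_deriv_ge {g g' : ℝ → ℝ} {a b c : ℝ}
    (hd : ∀ x ∈ Icc a b, HasDerivWithinAt g (g' x) (Icc a b) x)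
    (hc : ∀ x ∈ Icc a b, c ≤ g' x) :
    ∀ x ∈ Icc a b, ∀ y ∈ Icc a b, x ≤ y → c * (y - x) ≤ g y - g x := by
  intro x hx y hy hxy
  have hmono : MonotoneOn (fun z => g z - c * z) (Icc a b) := by
    apply monotoneOn_of_hasDerivWithinAt_nonneg (convex_Icc a b)
      (f' := fun z => g' z - c)
    · exact fun z hz => ((hd z hz).sub
        (((hasDerivAt_id z).const_mul c).hasDerivWithinAt.congr_deriv (by ring))).continuousWithinAt
    · intro z hz
      exact (((hd z (interior_subset hz)).sub
        (((hasDerivAt_id z).const_mul c).hasDerivWithinAt.congr_deriv (by ring)))).mono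
        interior_subset
    · intro z hz
      exact sub_nonneg.2 (hc z (interior_subset hz))
  have := hmono hx hy hxy
  simp only at this
  linarith

lemma sign_dichotomy {g : ℝ → ℝ} {a b η : ℝ} (hab : a ≤ b)
    (hg : ContinuousOn g (Icc a b)) (hη : 0 < η)
    (h : ∀ x ∈ Icc a b, η ≤ |g x|) :
    (∀ x ∈ Icc a b, η ≤ g x) ∨ (∀ x ∈ Icc a b, g x ≤ -η) := by
  have ha : a ∈ Icc a b := ⟨le_rfl, hab⟩
  have key : ∀ x ∈ Icc a b, ∀ y ∈ Icc a b, η ≤ g x → g y ≤ -η → False := by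
    intro x hx y hy hgx hgy
    have hsub : uIcc x y ⊆ Icc a b := uIcc_subset_Icc hx hy
    have : (0:ℝ) ∈ uIcc (g x) (g y) := by
      rw [mem_uIcc]; right; constructor <;> linarith
    obtain ⟨z, hz, hz0⟩ := intermediate_value_uIcc (hg.mono hsub) this
    have := h z (hsub hz)
    rw [hz0] at this; simp at this; linarith
  rcases le_or_gt η (g a) with hga | hga
  · left; intro x hx
    by_contra hlt
    push_neg at hlt
    have : g x ≤ -η := by
      have := h x hx
      rcases abs_cases (g x) with ⟨he, _⟩ | ⟨he, _⟩ <;> linarith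
    exact key a ha x hx hga this
  · right; intro x hx
    have hga' : g a ≤ -η := by
      have := h a ha
      rcases abs_cases (g a) with ⟨he, _⟩ | ⟨he, _⟩ <;> linarith
    by_contra hlt
    push_neg at hlt
    have : η ≤ g x := by
      have := h x hx
      rcases abs_cases (g x) with ⟨he, _⟩ | ⟨he, _⟩ <;> linarith
    exact key x hx a ha this hga'

/-- Key covering lemma, positive-derivative version, by induction on `n`. -/
lemma key_pos : ∀ n : ℕ, 1 ≤ n →
    ∀ (F : ℕ → ℝ → ℝ) (α β c ε lam : ℝ), α ≤ β → 0 < c → 0 < ε → ε ≤ c →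
    (∀ i < n, ∀ x ∈ Icc α β, HasDerivWithinAt (F i) (F (i+1) x) (Icc α β) x) →
    (∀ x ∈ Icc α β, c ≤ F n x) →
    ∃ l : List (ℝ × ℝ),
      (∀ p ∈ l, p.1 ≤ p.2 ∧ Icc p.1 p.2 ⊆ Icc α β) ∧
      ({r ∈ Icc α β | |F 0 r - lam| ≤ ε} ⊆ ⋃ p ∈ l, Icc p.1 p.2) ∧
      (l.map fun p => p.2 - p.1).sum ≤ 5 ^ n * (ε / c) ^ ((n : ℝ))⁻¹ := by
  intro n hn
  induction n, hn using Nat.le_induction with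
  | base =>
    intro F α β c ε lam hab hc hε hεc hd hF
    have hmono := mono_of_deriv_ge (hd 0 one_pos) hF
    have hrw : ((1:ℕ):ℝ)⁻¹ = (1:ℝ) := by norm_num
    by_cases hS : ∃ p ∈ Icc α β, |F 0 p - lam| ≤ ε
    · obtain ⟨p, hp, hpS⟩ := hS
      set d := 2 * (ε / c) with hd_def
      have hd0 : 0 < d := by positivity
      refine ⟨[(max α (p - d), min β (p + d))], ?_, ?_, ?_⟩
      · rintro q hq
        simp only [List.mem_singleton] at hq
        subst hq
        constructor
        · exact le_trans (max_le hp.1 (by linarith)) (le_min hp.2 (by linarith))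
        · exact Icc_subset_Icc (le_max_left _ _) (min_le_left _ _)
      · intro x hx
        obtain ⟨hxI, hxS⟩ := hx
        have h1 := abs_le.1 hpS
        have h2 := abs_le.1 hxS
        have hxp : |x - p| ≤ d := by
          rcases le_total x p with h | h
          · have := hmono x hxI p hp h
            rw [abs_of_nonpos (by linarith)]
            rw [hd_def, show 2 * (ε/c) = 2*ε/c by ring, le_div_iff₀ hc]
            nlinarith
          · have := hmono p hp x hxI h
            rw [abs_of_nonneg (by linarith)]
            rw [hd_def, show 2 * (ε/c) = 2*ε/c by ring, le_div_iff₀ hc]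
            nlinarith
        have := abs_le.1 hxp
        simp only [List.mem_singleton, iUnion_iUnion_eq_left]
        exact ⟨max_le hxI.1 (by linarith), le_min hxI.2 (by linarith)⟩
      · simp only [List.map_cons, List.map_nil, List.sum_cons, List.sum_nil, add_zero,
          hrw, Real.rpow_one]
        have h1 : min β (p + d) ≤ p + d := min_le_right _ _
        have h2 : p - d ≤ max α (p - d) := le_max_right _ _
        rw [hd_def] at h1 h2 ⊢
        linarith
    · push_neg at hS
      refine ⟨[], by simp, ?_, by simp; positivity⟩
      intro x hx
      exact absurd hx.2 (not_le.2 (hS x hx.1))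
  | succ n hn1 IH =>
    intro F α β c ε lam hab hc hε hεc hd hF
    have hn0 : (n:ℝ) ≠ 0 := Nat.cast_ne_zero.2 (by omega)
    have hnpos : (0:ℝ) < (n:ℝ) := by positivity
    obtain ⟨q, hq_def⟩ : ∃ q : ℝ, q = ε / c := ⟨_, rfl⟩
    have hq0 : 0 < q := by rw [hq_def]; positivity
    have hq1 : q ≤ 1 := by rw [hq_def, div_le_one hc]; exact hεc
    obtain ⟨u, hu_def⟩ : ∃ u : ℝ, u = ((n + 1 : ℕ) : ℝ)⁻¹ := ⟨_, rfl⟩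
    have hu_pos : 0 < u := by rw [hu_def]; positivity
    have hu_le1 : u ≤ 1 := by
      rw [hu_def]
      apply inv_le_one_of_one_le₀
      exact_mod_cast Nat.one_le_iff_ne_zero.2 (by omega)
    obtain ⟨t, ht_def⟩ : ∃ t : ℝ, t = q ^ u := ⟨_, rfl⟩
    have ht0 : 0 < t := ht_def ▸ Real.rpow_pos_of_pos hq0 _
    have ht1 : t ≤ 1 := ht_def ▸ Real.rpow_le_one hq0.le hq1 hu_pos.le
    obtain ⟨η, hη_def⟩ : ∃ η : ℝ, η = c * t := ⟨_, rfl⟩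
    have hη0 : 0 < η := by rw [hη_def]; positivity
    have hgoal : (ε / c) ^ (((n + 1 : ℕ)) : ℝ)⁻¹ = t := by
      rw [ht_def, hq_def, hu_def]
    rw [show ((((n:ℕ) + 1 : ℕ)) : ℝ)⁻¹ = (((n + 1 : ℕ)) : ℝ)⁻¹ from rfl, hgoal]
    have hqt : q ≤ t := by
      calc q = q ^ (1:ℝ) := (Real.rpow_one q).symm
      _ ≤ q ^ u := Real.rpow_le_rpow_of_exponent_ge hq0 hq1 hu_le1
      _ = t := ht_def.symm
    have hεη : ε ≤ η := by
      have : ε = c * q := by rw [hq_def]; field_simp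
      rw [this, hη_def]
      exact mul_le_mul_of_nonneg_left hqt hc.le
    -- key rpow computation : (ε/η)^(1/n) = t
    have hkey : (ε / η) ^ ((n:ℝ))⁻¹ = t := by
      have h1 : ε / η = q ^ (1 - u) := by
        rw [hη_def, ← div_div, ← hq_def, Real.rpow_sub hq0, Real.rpow_one, ht_def]
      rw [h1, ← Real.rpow_mul hq0.le, ht_def]
      congr 1
      rw [hu_def]
      push_cast
      field_simp
      ring
    -- monotonicity of g = F n
    have hmono := mono_of_deriv_ge (hd n (lt_add_one n)) hF
    have hcont : ContinuousOn (F n) (Icc α β) :=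
      fun x hx => ((hd n (lt_add_one n)) x hx).continuousWithinAt
    have h5n : (5:ℝ) ≤ 5 ^ n := by
      calc (5:ℝ) = 5 ^ 1 := (pow_one 5).symm
      _ ≤ 5 ^ n := pow_le_pow_right₀ (by norm_num) hn1
    have hfin : (5:ℝ) ^ n * t ≤ 5 ^ (n+1) * t := by
      have : (5:ℝ) ^ (n+1) = 5 ^ n * 5 := pow_succ 5 n
      nlinarith [ht0.le]
    by_cases hA : ∃ p ∈ Icc α β, |F n p| < η
    · obtain ⟨p, hp, hpA⟩ := hA
      have hFp := abs_lt.1 hpA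
      obtain ⟨α', hα'_def⟩ : ∃ x : ℝ, x = max α (p - 2*t) := ⟨_, rfl⟩
      obtain ⟨β', hβ'_def⟩ : ∃ x : ℝ, x = min β (p + 2*t) := ⟨_, rfl⟩
      have hαα' : α ≤ α' := hα'_def ▸ le_max_left _ _
      have hα'p : α' ≤ p := hα'_def ▸ max_le hp.1 (by linarith)
      have hpβ' : p ≤ β' := hβ'_def ▸ le_min hp.2 (by linarith)
      have hβ'β : β' ≤ β := hβ'_def ▸ min_le_left _ _
      -- left cover
      have hLeft : ∃ lL : List (ℝ × ℝ),
          (∀ pr ∈ lL, pr.1 ≤ pr.2 ∧ Icc pr.1 pr.2 ⊆ Icc α β) ∧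
          (∀ x ∈ Icc α β, |F 0 x - lam| ≤ ε → x ≤ α' → α < α' →
            x ∈ ⋃ pr ∈ lL, Icc pr.1 pr.2) ∧
          (lL.map fun pr => pr.2 - pr.1).sum ≤ 5 ^ n * t := by
        by_cases hL : α < α'
        · have hαeq : α' = p - 2*t := by
            rcases max_choice α (p - 2*t) with h | h
            · rw [← hα'_def] at h; rw [h] at hL; exact absurd hL (lt_irrefl α)
            · rw [← hα'_def] at h; exact h
          have hsub : Icc α α' ⊆ Icc α β := Icc_subset_Icc le_rfl (le_trans hα'p hp.2)
          have hgL : ∀ x ∈ Icc α α', F n x ≤ -η := by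
            intro x hx
            have hxI : x ∈ Icc α β := hsub hx
            have hxp : x ≤ p := le_trans hx.2 hα'p
            have hmx := hmono x hxI p hp hxp
            have hFnx_lt : F n x < η := by nlinarith
            have hnotA : η ≤ |F n x| := by
              by_contra hcon
              push_neg at hcon
              have habs := abs_lt.1 hcon
              have hpx : p - x < 2*t := by
                have h2 : c * (p - x) < c * (2*t) := by
                  rw [hη_def] at habs hFp; nlinarith
                exact lt_of_mul_lt_mul_left (by linarith) hc.le
              rw [hαeq] at hx
              linarith [hx.2]
            rcases abs_cases (F n x) with ⟨he, _⟩ | ⟨he, _⟩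
            · rw [he] at hnotA; linarith
            · rw [he] at hnotA; linarith
          have hdG : ∀ i < n, ∀ x ∈ Icc α α',
              HasDerivWithinAt (fun y => -(F i y)) (-(F (i+1) x)) (Icc α α') x :=
            fun i hi x hx => (((hd i (by omega)) x (hsub hx)).mono hsub).neg
          have hFG : ∀ x ∈ Icc α α', η ≤ -(F n x) := fun x hx => by linarith [hgL x hx]
          obtain ⟨l, h1, h2, h3⟩ := IH (fun i y => -(F i y)) α α' η ε (-lam)
            hL.le hη0 hε hεη hdG hFG
          refine ⟨l, fun pr hpr => ⟨(h1 pr hpr).1, (h1 pr hpr).2.trans hsub⟩, ?_, ?_⟩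
          · intro x hxI hxS hxα' _
            apply h2
            refine ⟨⟨hxI.1, hxα'⟩, ?_⟩
            rw [show -(F 0 x) - -lam = -(F 0 x - lam) from by ring, abs_neg]
            exact hxS
          · rw [hkey] at h3; exact h3
        · refine ⟨[], by simp, fun x _ _ _ hcon => absurd hcon hL, ?_⟩
          simp only [List.map_nil, List.sum_nil]
          exact mul_nonneg (pow_nonneg (by norm_num) n) ht0.le
      -- right cover
      have hRight : ∃ lR : List (ℝ × ℝ),
          (∀ pr ∈ lR, pr.1 ≤ pr.2 ∧ Icc pr.1 pr.2 ⊆ Icc α β) ∧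
          (∀ x ∈ Icc α β, |F 0 x - lam| ≤ ε → β' ≤ x → β' < β →
            x ∈ ⋃ pr ∈ lR, Icc pr.1 pr.2) ∧
          (lR.map fun pr => pr.2 - pr.1).sum ≤ 5 ^ n * t := by
        by_cases hR : β' < β
        · have hβeq : β' = p + 2*t := by
            rcases min_choice β (p + 2*t) with h | h
            · rw [← hβ'_def] at h; rw [h] at hR; exact absurd hR (lt_irrefl β)
            · rw [← hβ'_def] at h; exact h
          have hsub : Icc β' β ⊆ Icc α β := Icc_subset_Icc (le_trans hp.1 hpβ') le_rfl
          have hgR : ∀ x ∈ Icc β' β, η ≤ F n x := by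
            intro x hx
            have hxI : x ∈ Icc α β := hsub hx
            have hxp : p ≤ x := le_trans hpβ' hx.1
            have hmx := hmono p hp x hxI hxp
            have hFnx_gt : -η < F n x := by nlinarith
            have hnotA : η ≤ |F n x| := by
              by_contra hcon
              push_neg at hcon
              have habs := abs_lt.1 hcon
              have hpx : x - p < 2*t := by
                have h2 : c * (x - p) < c * (2*t) := by
                  rw [hη_def] at habs hFp; nlinarith
                exact lt_of_mul_lt_mul_left (by linarith) hc.le
              rw [hβeq] at hx
              linarith [hx.1]
            rcases abs_cases (F n x) with ⟨he, _⟩ | ⟨he, _⟩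
            · rw [he] at hnotA; linarith
            · rw [he] at hnotA; linarith
          have hdG : ∀ i < n, ∀ x ∈ Icc β' β,
              HasDerivWithinAt (F i) (F (i+1) x) (Icc β' β) x :=
            fun i hi x hx => ((hd i (by omega)) x (hsub hx)).mono hsub
          obtain ⟨l, h1, h2, h3⟩ := IH F β' β η ε lam hR.le hη0 hε hεη hdG hgR
          refine ⟨l, fun pr hpr => ⟨(h1 pr hpr).1, (h1 pr hpr).2.trans hsub⟩, ?_, ?_⟩
          · intro x hxI hxS hxβ' _
            exact h2 ⟨⟨hxβ', hxI.2⟩, hxS⟩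
          · rw [hkey] at h3; exact h3
        · refine ⟨[], by simp, fun x _ _ _ hcon => absurd hcon hR, ?_⟩
          simp only [List.map_nil, List.sum_nil]
          exact mul_nonneg (pow_nonneg (by norm_num) n) ht0.le
      obtain ⟨lL, hL1, hL2, hL3⟩ := hLeft
      obtain ⟨lR, hR1, hR2, hR3⟩ := hRight
      refine ⟨(α', β') :: (lL ++ lR), ?_, ?_, ?_⟩
      · rintro pr hpr
        rcases List.mem_cons.1 hpr with h | h
        · subst h; exact ⟨le_trans hα'p hpβ', Icc_subset_Icc hαα' hβ'β⟩
        · rcases List.mem_append.1 h with h' | h'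
          · exact hL1 pr h'
          · exact hR1 pr h'
      · intro x hx
        obtain ⟨hxI, hxS⟩ := hx
        have hmid : x ∈ Icc α' β' → x ∈ ⋃ pr ∈ ((α', β') :: (lL ++ lR)), Icc pr.1 pr.2 :=
          fun h => mem_iUnion₂.2 ⟨(α', β'), List.mem_cons_self, h⟩
        rcases le_total x α' with hxα' | hα'x
        · rcases eq_or_lt_of_le hαα' with heq | hlt
          · exact hmid ⟨by rw [← heq]; exact hxI.1, le_trans hxα' (le_trans hα'p hpβ')⟩
          · obtain ⟨pr, hpr, hxpr⟩ := mem_iUnion₂.1 (hL2 x hxI hxS hxα' hlt)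
            exact mem_iUnion₂.2 ⟨pr, List.mem_cons_of_mem _ (List.mem_append_left _ hpr), hxpr⟩
        · rcases le_total x β' with hxβ' | hβ'x
          · exact hmid ⟨hα'x, hxβ'⟩
          · rcases eq_or_lt_of_le hβ'β with heq | hlt
            · exact hmid ⟨hα'x, by rw [heq]; exact hxI.2⟩
            · obtain ⟨pr, hpr, hxpr⟩ := mem_iUnion₂.1 (hR2 x hxI hxS hβ'x hlt)
              exact mem_iUnion₂.2 ⟨pr, List.mem_cons_of_mem _ (List.mem_append_right _ hpr), hxpr⟩
      · simp only [List.map_cons, List.map_append, List.sum_cons, List.sum_append]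
        have hm : β' - α' ≤ 4*t := by
          have h1 : β' ≤ p + 2*t := hβ'_def ▸ min_le_right _ _
          have h2 : p - 2*t ≤ α' := hα'_def ▸ le_max_right _ _
          linarith
        have hps : (5:ℝ) ^ (n+1) = 5 ^ n * 5 := pow_succ 5 n
        nlinarith [mul_le_mul_of_nonneg_right h5n ht0.le, ht0.le]
    · push_neg at hA
      rcases sign_dichotomy hab hcont hη0 hA with hpos | hneg
      · obtain ⟨l, h1, h2, h3⟩ := IH F α β η ε lam hab hη0 hε hεη
          (fun i hi => hd i (by omega)) hpos
        refine ⟨l, h1, h2, ?_⟩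
        rw [hkey] at h3
        exact le_trans h3 hfin
      · have hdG : ∀ i < n, ∀ x ∈ Icc α β,
            HasDerivWithinAt (fun y => -(F i y)) (-(F (i+1) x)) (Icc α β) x :=
          fun i hi x hx => ((hd i (by omega)) x hx).neg
        have hFG : ∀ x ∈ Icc α β, η ≤ -(F n x) := fun x hx => by linarith [hneg x hx]
        obtain ⟨l, h1, h2, h3⟩ := IH (fun i y => -(F i y)) α β η ε (-lam)
          hab hη0 hε hεη hdG hFG
        refine ⟨l, h1, ?_, ?_⟩
        · intro x hx
          apply h2
          refine ⟨hx.1, ?_⟩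
          rw [show -(F 0 x) - -lam = -(F 0 x - lam) from by ring, abs_neg]
          exact hx.2
        · rw [hkey] at h3
          exact le_trans h3 hfin


lemma key_abs (n : ℕ) (hn : 1 ≤ n) (F : ℕ → ℝ → ℝ) (α β c ε lam : ℝ)
    (hab : α ≤ β) (hc : 0 < c) (hε : 0 < ε) (hεc : ε ≤ c)
    (hd : ∀ i < n, ∀ x ∈ Icc α β, HasDerivWithinAt (F i) (F (i+1) x) (Icc α β) x)
    (hco : ContinuousOn (F n) (Icc α β))
    (hF : ∀ x ∈ Icc α β, c ≤ |F n x|) :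
    ∃ l : List (ℝ × ℝ),
      (∀ p ∈ l, p.1 ≤ p.2 ∧ Icc p.1 p.2 ⊆ Icc α β) ∧
      ({r ∈ Icc α β | |F 0 r - lam| ≤ ε} ⊆ ⋃ p ∈ l, Icc p.1 p.2) ∧
      (l.map fun p => p.2 - p.1).sum ≤ 5 ^ n * (ε / c) ^ ((n : ℝ))⁻¹ := by
  rcases sign_dichotomy hab hco hc hF with hpos | hneg
  · exact key_pos n hn F α β c ε lam hab hc hε hεc hd hpos
  · obtain ⟨l, h1, h2, h3⟩ := key_pos n hn (fun i y => -(F i y)) α β c ε (-lam) hab hc hε hεc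
      (fun i hi x hx => ((hd i hi) x hx).neg) (fun x hx => by show c ≤ -(F n x); linarith [hneg x hx])
    refine ⟨l, h1, ?_, h3⟩
    intro x hx
    apply h2
    exact ⟨hx.1, by
      rw [show -(F 0 x) - -lam = -(F 0 x - lam) from by ring, abs_neg]; exact hx.2⟩


end Helpers

open Set in
/-- Lemma 2.5: `E_{λ,δ}` is covered by finitely many intervals of total length `O(δ)`. -/
theorem covering_lemma
    (R : ℝ) (hR : 0 < R) (m : ℕ) (hm : 1 ≤ m) (v : ℝ → ℝ) (hv : GoodProfile R m v) :
    ∃ C₀ δ₀ : ℝ, 0 < C₀ ∧ 0 < δ₀ ∧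
      ∀ lam : ℝ, ∀ δ ∈ Set.Ioc (0 : ℝ) δ₀,
        ∃ (N : ℕ) (a b : Fin N → ℝ),
          (∀ i, a i ≤ b i) ∧
          (∀ i, Set.Icc (a i) (b i) ⊆ Set.Icc (0 : ℝ) R) ∧
          (Eset R m v lam δ ⊆ ⋃ i, Set.Icc (a i) (b i)) ∧
          (∑ i, (b i - a i)) < C₀ * δ := by
  obtain ⟨hCD, hnz⟩ := hv
  have hsUD : UniqueDiffOn ℝ (Icc (0:ℝ) R) := uniqueDiffOn_Icc hR
  have hscomp : IsCompact (Icc (0:ℝ) R) := isCompact_Icc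
  obtain ⟨F, hF_def⟩ : ∃ F : ℕ → ℝ → ℝ, F = fun i => iteratedDerivWithin i v (Icc 0 R) :=
    ⟨_, rfl⟩
  have hF0 : ∀ x, F 0 x = v x := by
    intro x
    simp only [hF_def, iteratedDerivWithin_zero]
  have hder : ∀ i < m, ∀ x ∈ Icc (0:ℝ) R, HasDerivWithinAt (F i) (F (i+1) x) (Icc 0 R) x := by
    intro i hi x hx
    have hdiff : DifferentiableWithinAt ℝ (F i) (Icc 0 R) x := by
      rw [hF_def]
      exact (hCD.differentiableOn_iteratedDerivWithin (by exact_mod_cast hi) hsUD) x hx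
    have h2 := hdiff.hasDerivWithinAt
    have h3 : derivWithin (F i) (Icc 0 R) x = F (i+1) x := by
      rw [hF_def, ← iteratedDerivWithin_succ]
    rwa [h3] at h2
  have hcont : ∀ i ≤ m, ContinuousOn (F i) (Icc (0:ℝ) R) := by
    intro i hi
    rw [hF_def]
    exact hCD.continuousOn_iteratedDerivWithin (by exact_mod_cast hi) hsUD
  have hnz' : ∀ x ∈ Icc (0:ℝ) R, ∃ k, 1 ≤ k ∧ k ≤ m ∧ F k x ≠ 0 := by
    intro x hx
    by_contra hcon
    push_neg at hcon
    apply hnz x hx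
    apply Finset.sum_eq_zero
    intro k hk
    rw [Finset.mem_Icc] at hk
    rw [abs_eq_zero]
    have := hcon k hk.1 hk.2
    rwa [hF_def] at this
  -- local lower bounds
  have hloc : ∀ x : ℝ, ∃ (k : ℕ) (cx εx : ℝ), 0 < εx ∧
      (x ∈ Icc (0:ℝ) R → (1 ≤ k ∧ k ≤ m ∧ 0 < cx ∧
        ∀ y ∈ Icc (0:ℝ) R, y ∈ Metric.ball x εx → cx ≤ |F k y|)) := by
    intro x
    by_cases hx : x ∈ Icc (0:ℝ) R
    · obtain ⟨k, hk1, hk2, hk3⟩ := hnz' x hx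
      have habs : 0 < |F k x| := abs_pos.2 hk3
      have hco : ContinuousWithinAt (fun y => |F k y|) (Icc (0:ℝ) R) x :=
        ((hcont k hk2) x hx).abs
      have hev : {y | |F k x|/2 < |F k y|} ∈ nhdsWithin x (Icc (0:ℝ) R) :=
        hco (Ioi_mem_nhds (by linarith))
      rw [Metric.mem_nhdsWithin_iff] at hev
      obtain ⟨εx, hεx, hball⟩ := hev
      exact ⟨k, |F k x|/2, εx, hεx,
        fun _ => ⟨hk1, hk2, by positivity,
          fun y hy hby => le_of_lt (hball ⟨hby, hy⟩)⟩⟩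
    · exact ⟨1, 1, 1, one_pos, fun h => absurd h hx⟩
  choose kk cc ee hee hprop using hloc
  obtain ⟨T, hTs, hTcov⟩ := hscomp.elim_nhds_subcover (fun x => Metric.ball x (ee x))
    (fun x _ => Metric.ball_mem_nhds x (hee x))
  have hTne : T.Nonempty := by
    by_contra h
    rw [Finset.not_nonempty_iff_eq_empty] at h
    have h0 : (0:ℝ) ∈ Icc (0:ℝ) R := ⟨le_rfl, hR.le⟩
    have := hTcov h0
    simp [h] at this
  obtain ⟨c₀, hc₀_def⟩ : ∃ c₀ : ℝ, c₀ = T.inf' hTne cc := ⟨_, rfl⟩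
  have hc₀pos : 0 < c₀ := by
    rw [hc₀_def, Finset.lt_inf'_iff]
    intro b hb
    exact (hprop b (hTs b hb)).2.2.1
  -- Lebesgue number
  obtain ⟨L, hL, hLeb⟩ := lebesgue_number_lemma_of_metric
    (c := fun i : T => Metric.ball (i:ℝ) (ee i)) hscomp
    (fun i => Metric.isOpen_ball) (by
      intro x hx
      obtain ⟨y, hyT, hxy⟩ := Set.mem_iUnion₂.1 (hTcov hx)
      exact Set.mem_iUnion.2 ⟨⟨y, hyT⟩, hxy⟩)
  -- number of pieces
  obtain ⟨K, hK⟩ := exists_nat_gt (R / L)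
  have hK0 : 0 < K := by
    have h1 : (0:ℝ) < R / L := by positivity
    exact_mod_cast h1.trans hK
  have hK0' : (0:ℝ) < K := by exact_mod_cast hK0
  obtain ⟨w, hw_def⟩ : ∃ w : ℝ, w = R / K := ⟨_, rfl⟩
  have hw0 : 0 < w := by rw [hw_def]; positivity
  have hwL : w < L := by
    rw [hw_def, div_lt_iff₀ hK0']
    have := (div_lt_iff₀ hL).1 hK
    linarith
  have hKw : (K:ℝ) * w = R := by rw [hw_def]; field_simp
  -- pieces are inside [0, R]
  have hsubj : ∀ j : ℕ, j < K → Icc ((j:ℝ)*w) ((j:ℝ)*w + w) ⊆ Icc (0:ℝ) R := by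
    intro j hj
    apply Icc_subset_Icc
    · positivity
    · have h1 : (j:ℝ) + 1 ≤ K := by exact_mod_cast hj
      calc (j:ℝ)*w + w = ((j:ℝ)+1)*w := by ring
      _ ≤ (K:ℝ)*w := by nlinarith
      _ = R := hKw
  -- per-piece derivative lower bound
  have hpiece : ∀ j : ℕ, ∃ k : ℕ, 1 ≤ k ∧ k ≤ m ∧
      (j < K → ∀ y ∈ Icc ((j:ℝ)*w) ((j:ℝ)*w + w), c₀ ≤ |F k y|) := by
    intro j
    by_cases hj : j < K
    · have hjmem : (j:ℝ)*w ∈ Icc (0:ℝ) R := hsubj j hj ⟨le_rfl, by linarith⟩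
      obtain ⟨i, hi⟩ := hLeb ((j:ℝ)*w) hjmem
      refine ⟨kk i, (hprop i (hTs i i.2)).1, (hprop i (hTs i i.2)).2.1, fun _ y hy => ?_⟩
      have hyball : y ∈ Metric.ball ((j:ℝ)*w) L := by
        rw [Metric.mem_ball, Real.dist_eq]
        rw [abs_of_nonneg (by linarith [hy.1])]
        linarith [hy.2]
      have hy2 : y ∈ Metric.ball (i:ℝ) (ee i) := hi hyball
      have := (hprop i (hTs i i.2)).2.2.2 y (hsubj j hj hy) hy2
      calc c₀ ≤ cc i := hc₀_def ▸ Finset.inf'_le _ i.2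
      _ ≤ |F (kk i) y| := this
    · exact ⟨1, le_rfl, hm, fun h => absurd h hj⟩
  choose nj hnj1 hnj2 hbig using hpiece
  -- Lipschitz bound
  obtain ⟨M, hM⟩ := hscomp.exists_bound_of_continuousOn (hcont 1 hm)
  have hM0 : 0 ≤ M := le_trans (norm_nonneg _) (hM 0 ⟨le_rfl, hR.le⟩)
  have hlip : ∀ x ∈ Icc (0:ℝ) R, ∀ y ∈ Icc (0:ℝ) R, |v y - v x| ≤ M * |y - x| := by
    intro x hx y hy
    have h1 := (convex_Icc (0:ℝ) R).norm_image_sub_le_of_norm_hasDerivWithin_le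
      (fun z hz => hder 0 hm z hz) (fun z hz => hM z hz) hx hy
    rw [Real.norm_eq_abs, Real.norm_eq_abs, hF0, hF0] at h1
    exact h1
  -- constants
  obtain ⟨D, hD_def⟩ : ∃ D : ℝ, D = max 1 ((M+1)/c₀) := ⟨_, rfl⟩
  have hD1 : 1 ≤ D := hD_def ▸ le_max_left _ _
  have hD0 : 0 < D := lt_of_lt_of_le one_pos hD1
  obtain ⟨δ₀, hδ₀_def⟩ : ∃ d : ℝ, d = min 1 (c₀/(M+1)) := ⟨_, rfl⟩
  have hδ₀pos : 0 < δ₀ := by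
    rw [hδ₀_def]
    exact lt_min one_pos (by positivity)
  obtain ⟨C₀, hC₀_def⟩ : ∃ C : ℝ, C = (K:ℝ) * (5^m * D) + 1 := ⟨_, rfl⟩
  have h5m : (0:ℝ) < 5^m := by positivity
  have hC₀pos : 0 < C₀ := by rw [hC₀_def]; nlinarith [mul_pos hK0' (mul_pos h5m hD0)]
  refine ⟨C₀, δ₀, hC₀pos, hδ₀pos, ?_⟩
  intro lam δ hδ
  obtain ⟨hδ0, hδδ₀⟩ := hδ
  have hδ1 : δ ≤ 1 := le_trans hδδ₀ (by rw [hδ₀_def]; exact min_le_left _ _)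
  have hδm0 : 0 < δ^m := by positivity
  obtain ⟨ε, hε_def⟩ : ∃ e : ℝ, e = (M+1) * δ^m := ⟨_, rfl⟩
  have hε0 : 0 < ε := by rw [hε_def]; positivity
  have hδm_le : δ^m ≤ δ := pow_le_of_le_one hδ0.le hδ1 (by omega)
  have hM1 : (0:ℝ) < M + 1 := by linarith
  have hεc₀ : ε ≤ c₀ := by
    have h1 : δ ≤ c₀/(M+1) := le_trans hδδ₀ (by rw [hδ₀_def]; exact min_le_right _ _)
    have h2 : δ * (M+1) ≤ c₀ := (le_div_iff₀ hM1).1 h1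
    rw [hε_def]
    nlinarith
  -- E is contained in the sublevel set
  have hE : Eset R m v lam δ ⊆ {r ∈ Icc (0:ℝ) R | |v r - lam| ≤ ε} := by
    intro r hr
    obtain ⟨hrI, hrd⟩ := hr
    obtain ⟨r', hr', hrr'⟩ := EMetric.infEdist_lt_iff.1 hrd
    rw [edist_lt_ofReal] at hrr'
    obtain ⟨hr'I, hr'v⟩ := hr'
    refine ⟨hrI, ?_⟩
    have h1 := hlip r' hr'I r hrI
    have h2 : |r - r'| < δ^m := by rw [← Real.dist_eq]; exact hrr'
    have h3 : |v r - lam| ≤ |v r - v r'| + |v r' - lam| := abs_sub_le _ _ _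
    rw [hε_def]
    nlinarith [abs_nonneg (r - r'), abs_nonneg (v r - v r')]
  -- rpow bounds
  have hq0 : 0 < ε / c₀ := by positivity
  have hq1 : ε / c₀ ≤ 1 := by rw [div_le_one hc₀pos]; exact hεc₀
  have hm0 : (m:ℝ) ≠ 0 := Nat.cast_ne_zero.2 (by omega)
  have hqm : (ε/c₀) ^ ((m:ℝ))⁻¹ ≤ D * δ := by
    have h1 : ε / c₀ = ((M+1)/c₀) * δ^m := by rw [hε_def]; ring
    have hB0 : 0 < (M+1)/c₀ := by positivity
    have h2 : (ε/c₀) ^ ((m:ℝ))⁻¹ = ((M+1)/c₀) ^ ((m:ℝ))⁻¹ * ((δ^m) ^ ((m:ℝ))⁻¹) := by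
      rw [h1, Real.mul_rpow hB0.le (by positivity)]
    have h3 : ((δ:ℝ)^m) ^ ((m:ℝ))⁻¹ = δ := by
      rw [← Real.rpow_natCast δ m, ← Real.rpow_mul hδ0.le]
      rw [mul_inv_cancel₀ hm0, Real.rpow_one]
    have h4 : ((M+1)/c₀) ^ ((m:ℝ))⁻¹ ≤ D := by
      rcases le_total ((M+1)/c₀) 1 with hB | hB
      · exact le_trans (Real.rpow_le_one hB0.le hB (by positivity)) hD1
      · calc ((M+1)/c₀) ^ ((m:ℝ))⁻¹ ≤ ((M+1)/c₀) ^ (1:ℝ) :=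
              Real.rpow_le_rpow_of_exponent_le hB
                (inv_le_one_of_one_le₀ (by exact_mod_cast hm))
        _ = (M+1)/c₀ := Real.rpow_one _
        _ ≤ D := hD_def ▸ le_max_right _ _
    rw [h2, h3]
    exact mul_le_mul_of_nonneg_right h4 hδ0.le
  -- per-piece cover
  have hcovj : ∀ j : ℕ, ∃ lj : List (ℝ × ℝ),
      (∀ p ∈ lj, p.1 ≤ p.2 ∧ Icc p.1 p.2 ⊆ Icc (0:ℝ) R) ∧
      (j < K → {r ∈ Icc ((j:ℝ)*w) ((j:ℝ)*w + w) | |v r - lam| ≤ ε} ⊆ ⋃ p ∈ lj, Icc p.1 p.2) ∧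
      (lj.map fun p => p.2 - p.1).sum ≤ 5^m * (D * δ) := by
    intro j
    by_cases hj : j < K
    · obtain ⟨l, h1, h2, h3⟩ := key_abs (nj j) (hnj1 j) F ((j:ℝ)*w) ((j:ℝ)*w + w) c₀ ε lam
        (by linarith) hc₀pos hε0 hεc₀
        (fun i hi x hx =>
          (hder i (lt_of_lt_of_le hi (hnj2 j)) x (hsubj j hj hx)).mono (hsubj j hj))
        ((hcont (nj j) (hnj2 j)).mono (hsubj j hj))
        (hbig j hj)
      refine ⟨l, fun p hp => ⟨(h1 p hp).1, (h1 p hp).2.trans (hsubj j hj)⟩, fun _ => ?_, ?_⟩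
      · intro x hx
        apply h2
        exact ⟨hx.1, by rw [hF0]; exact hx.2⟩
      · calc (l.map fun p => p.2 - p.1).sum
            ≤ 5^(nj j) * (ε/c₀) ^ (((nj j : ℕ)):ℝ)⁻¹ := h3
        _ ≤ 5^m * (D*δ) := by
            have ha : (5:ℝ)^(nj j) ≤ 5^m := pow_le_pow_right₀ (by norm_num) (hnj2 j)
            have hnj0 : (0:ℝ) < ((nj j : ℕ):ℝ) := by
              have := hnj1 j; exact_mod_cast Nat.lt_of_lt_of_le Nat.zero_lt_one this
            have hb : (ε/c₀) ^ (((nj j : ℕ)):ℝ)⁻¹ ≤ (ε/c₀) ^ ((m:ℝ))⁻¹ :=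
              Real.rpow_le_rpow_of_exponent_ge hq0 hq1
                (inv_anti₀ hnj0 (by exact_mod_cast hnj2 j))
            calc (5:ℝ)^(nj j) * (ε/c₀) ^ (((nj j : ℕ)):ℝ)⁻¹
                ≤ 5^m * ((ε/c₀) ^ ((m:ℝ))⁻¹) :=
                  mul_le_mul ha hb (Real.rpow_pos_of_pos hq0 _).le (by positivity)
            _ ≤ 5^m * (D*δ) := mul_le_mul_of_nonneg_left hqm (by positivity)
    · refine ⟨[], by simp, fun h => absurd h hj, ?_⟩
      simp only [List.map_nil, List.sum_nil]
      nlinarith [mul_pos h5m (mul_pos hD0 hδ0)]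
  choose ll hll1 hll2 hll3 using hcovj
  obtain ⟨LL, hLL_def⟩ : ∃ LL : List (ℝ × ℝ), LL = ((List.range K).map ll).flatten := ⟨_, rfl⟩
  have hLLmem : ∀ p ∈ LL, p.1 ≤ p.2 ∧ Icc p.1 p.2 ⊆ Icc (0:ℝ) R := by
    intro p hp
    rw [hLL_def, List.mem_flatten] at hp
    obtain ⟨l', hl', hpl⟩ := hp
    rw [List.mem_map] at hl'
    obtain ⟨j, hjr, rfl⟩ := hl'
    exact hll1 j p hpl
  -- piece finding
  have hfind : ∀ x ∈ Icc (0:ℝ) R, ∃ j < K, x ∈ Icc ((j:ℝ)*w) ((j:ℝ)*w + w) := by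
    intro x hx
    by_cases hj : Nat.floor (x/w) < K
    · refine ⟨Nat.floor (x/w), hj, ?_, ?_⟩
      · have h1 : ((Nat.floor (x/w) : ℕ):ℝ) ≤ x/w := Nat.floor_le (div_nonneg hx.1 hw0.le)
        calc ((Nat.floor (x/w) : ℕ):ℝ)*w ≤ (x/w)*w := mul_le_mul_of_nonneg_right h1 hw0.le
        _ = x := div_mul_cancel₀ x hw0.ne'
      · have h2 : x/w < ((Nat.floor (x/w) : ℕ):ℝ) + 1 := Nat.lt_floor_add_one _
        have h3 : x < (((Nat.floor (x/w) : ℕ):ℝ)+1)*w := by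
          calc x = (x/w)*w := (div_mul_cancel₀ x hw0.ne').symm
          _ < (((Nat.floor (x/w) : ℕ):ℝ)+1)*w := by nlinarith
        linarith
    · push_neg at hj
      have h1 : (K:ℝ) ≤ x/w :=
        le_trans (by exact_mod_cast hj) (Nat.floor_le (div_nonneg hx.1 hw0.le))
      have h2 : R ≤ x := by
        rw [← hKw]
        calc (K:ℝ)*w ≤ (x/w)*w := mul_le_mul_of_nonneg_right h1 hw0.le
        _ = x := div_mul_cancel₀ x hw0.ne'
      have hxR : x = R := le_antisymm hx.2 h2
      have hcast : ((K-1:ℕ):ℝ) = (K:ℝ) - 1 := by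
        rw [Nat.cast_sub hK0, Nat.cast_one]
      refine ⟨K-1, Nat.sub_lt hK0 one_pos, ?_, ?_⟩
      · rw [hcast, hxR, ← hKw]; nlinarith
      · rw [hcast, hxR, ← hKw]; nlinarith
  -- assemble
  refine ⟨LL.length, fun i => (LL.get i).1, fun i => (LL.get i).2, ?_, ?_, ?_, ?_⟩
  · exact fun i => (hLLmem (LL.get i) (List.get_mem LL i)).1
  · exact fun i => (hLLmem (LL.get i) (List.get_mem LL i)).2
  · intro x hx
    obtain ⟨hxI, hxS⟩ := hE hx
    obtain ⟨j, hjK, hxj⟩ := hfind x hxI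
    obtain ⟨p, hp, hxp⟩ := mem_iUnion₂.1 (hll2 j hjK ⟨hxj, hxS⟩)
    have hpLL : p ∈ LL := by
      rw [hLL_def, List.mem_flatten]
      exact ⟨ll j, List.mem_map_of_mem (List.mem_range.2 hjK), hp⟩
    obtain ⟨i, hi⟩ := List.mem_iff_get.1 hpLL
    rw [mem_iUnion]
    refine ⟨i, ?_⟩
    show x ∈ Icc (LL.get i).1 (LL.get i).2
    rw [hi]; exact hxp
  · show (∑ i, ((LL.get i).2 - (LL.get i).1)) < C₀ * δ
    have hsum_eq : (∑ i, ((LL.get i).2 - (LL.get i).1))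
        = (LL.map fun p => p.2 - p.1).sum := by
      rw [← List.sum_ofFn]
      congr 1
      conv_rhs => rw [← List.ofFn_get LL]
      rw [List.map_ofFn]
      rfl
    rw [hsum_eq]
    have h1 : (LL.map fun p => p.2 - p.1).sum ≤ (K:ℝ) * (5^m * (D*δ)) := by
      rw [hLL_def, List.map_flatten, List.sum_flatten]
      have hlen : ((((List.range K).map ll).map (List.map fun p => p.2 - p.1)).map
          List.sum).length = K := by
        simp
      calc ((((List.range K).map ll).map (List.map fun p => p.2 - p.1)).map List.sum).sum
          ≤ ((((List.range K).map ll).map (List.map fun p => p.2 - p.1)).map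
              List.sum).length • (5^m * (D*δ)) := by
            apply List.sum_le_card_nsmul
            intro x hx
            simp only [List.mem_map, List.mem_range] at hx
            obtain ⟨l', ⟨l'', ⟨j, hj, rfl⟩, rfl⟩, rfl⟩ := hx
            exact hll3 j
      _ = (K:ℝ) * (5^m * (D*δ)) := by
            rw [hlen, nsmul_eq_mul]
    calc (LL.map fun p => p.2 - p.1).sum ≤ (K:ℝ) * (5^m * (D*δ)) := h1
    _ < C₀ * δ := by rw [hC₀_def]; nlinarith


end
end

section
/- Let R > 0, let m ≥ 1 be an integer, and let v : [0,R] → ℝ satisfy Assumption 1.1. Then there exist constants C₀ > 0 and δ₀ > 0 such that for every λ ∈ ℝ and every δ ∈ (0, δ₀], the one-dimensional Lebesgue measure of the set E_{λ,δ} is at most C₀ δ. -/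
open MeasureTheory
open Set

noncomputable section

lemma diam_volume' {S : Set ℝ} {d : ℝ} (hd : 0 ≤ d)
    (h : ∀ x ∈ S, ∀ y ∈ S, dist x y ≤ d) :
    volume S ≤ ENNReal.ofReal d :=
  le_trans (Real.volume_le_diam S)
    (EMetric.diam_le fun x hx y hy => (edist_le_ofReal hd).2 (h x hx y hy))

lemma growth_dichotomy' {a b c : ℝ} (hc : 0 < c) {g g' : ℝ → ℝ}
    (hd : ∀ x ∈ Icc a b, HasDerivWithinAt g (g' x) (Icc a b) x)
    (hcont : ContinuousOn g' (Icc a b))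
    (hlb : ∀ x ∈ Icc a b, c ≤ |g' x|) :
    (∀ x ∈ Icc a b, ∀ y ∈ Icc a b, x ≤ y → c * (y - x) ≤ g y - g x) ∨
    (∀ x ∈ Icc a b, ∀ y ∈ Icc a b, x ≤ y → c * (y - x) ≤ g x - g y) := by
  have hgc : ContinuousOn g (Icc a b) := fun x hx => (hd x hx).continuousWithinAt
  have hderiv : ∀ x ∈ interior (Icc a b), HasDerivAt g (g' x) x := by
    intro x hx
    rw [interior_Icc] at hx
    exact (hd x (Ioo_subset_Icc_self hx)).hasDerivAt (Icc_mem_nhds hx.1 hx.2)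
  have hdiff : DifferentiableOn ℝ g (interior (Icc a b)) :=
    fun x hx => (hderiv x hx).differentiableAt.differentiableWithinAt
  have hsign : (∀ x ∈ Icc a b, c ≤ g' x) ∨ (∀ x ∈ Icc a b, g' x ≤ -c) := by
    by_contra hcon
    push_neg at hcon
    obtain ⟨⟨x, hx, hx'⟩, ⟨y, hy, hy'⟩⟩ := hcon
    have hxneg : g' x ≤ -c := by
      rcases abs_cases (g' x) with ⟨h1, _⟩ | ⟨h1, _⟩
      · linarith [hlb x hx]
      · linarith [hlb x hx]
    have hypos : c ≤ g' y := by
      rcases abs_cases (g' y) with ⟨h1, _⟩ | ⟨h1, _⟩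
      · linarith [hlb y hy]
      · linarith [hlb y hy]
    have hsub : uIcc x y ⊆ Icc a b := Set.uIcc_subset_Icc hx hy
    have h0 : (0:ℝ) ∈ uIcc (g' x) (g' y) := by
      rw [Set.mem_uIcc]; left; constructor <;> linarith
    obtain ⟨z, hz, hz0⟩ := intermediate_value_uIcc (hcont.mono hsub) h0
    have := hlb z (hsub hz)
    rw [hz0] at this
    simp only [abs_zero] at this
    linarith
  rcases hsign with hpos | hneg
  · left
    intro x hx y hy hxy
    exact (convex_Icc a b).mul_sub_le_image_sub_of_le_deriv hgc hdiff
      (fun z hz => by rw [(hderiv z hz).deriv]; exact hpos z (interior_subset hz)) x hx y hy hxy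
  · right
    intro x hx y hy hxy
    have := (convex_Icc a b).image_sub_le_mul_sub_of_deriv_le hgc hdiff
      (fun z hz => by rw [(hderiv z hz).deriv]; exact hneg z (interior_subset hz)) x hx y hy hxy
    linarith

lemma sublevel_lemma' (n : ℕ) :
    ∀ (G : ℕ → ℝ → ℝ) (a b c : ℝ), 0 < c →
    (∀ k < n + 1, ∀ x ∈ Icc a b, HasDerivWithinAt (G k) (G (k+1) x) (Icc a b) x) →
    ContinuousOn (G (n+1)) (Icc a b) →
    (∀ x ∈ Icc a b, c ≤ |G (n+1) x|) →
    ∀ ε : ℝ, 0 < ε → ε ≤ 1 →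
    volume {x ∈ Icc a b | |G 0 x| < c * ε ^ (n+1)} ≤ ENNReal.ofReal (4 ^ (n+1) * ε) := by
  induction n with
  | zero =>
    intro G a b c hc hchain hcont hlb ε hε hε1
    have hgrow := growth_dichotomy' hc (hchain 0 (by norm_num)) hcont hlb
    have key : ∀ x ∈ Icc a b, ∀ y ∈ Icc a b, x ≤ y → c * (y - x) ≤ |G 0 y - G 0 x| := by
      rcases hgrow with h | h
      · intro x hx y hy hxy; exact le_trans (h x hx y hy hxy) (le_abs_self _)
      · intro x hx y hy hxy
        refine le_trans (h x hx y hy hxy) ?_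
        rw [abs_sub_comm]; exact le_abs_self _
    apply diam_volume' (by positivity)
    rintro x ⟨hx, hx2⟩ y ⟨hy, hy2⟩
    rw [pow_one] at hx2 hy2
    rw [Real.dist_eq]
    rcases le_total x y with hxy | hxy
    · have h1 := key x hx y hy hxy
      have h2 : |G 0 y - G 0 x| ≤ |G 0 y| + |G 0 x| := abs_sub _ _
      have : c * (y - x) < 2 * (c * ε) := by linarith
      have hyx : y - x ≤ 4 * ε := by nlinarith
      have h4 : (4:ℝ) ^ (0+1) * ε = 4 * ε := by norm_num
      rw [abs_sub_comm, abs_of_nonneg (by linarith : (0:ℝ) ≤ y - x), h4]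
      linarith
    · have h1 := key y hy x hx hxy
      have h2 : |G 0 x - G 0 y| ≤ |G 0 x| + |G 0 y| := abs_sub _ _
      have : c * (x - y) < 2 * (c * ε) := by linarith
      have hyx : x - y ≤ 4 * ε := by nlinarith
      have h4 : (4:ℝ) ^ (0+1) * ε = 4 * ε := by norm_num
      rw [abs_of_nonneg (by linarith : (0:ℝ) ≤ x - y), h4]
      linarith
  | succ n IH =>
    intro G a b c hc hchain hcont hlb ε hε hε1
    set ρ := c * ε with hρdef
    have hρ : 0 < ρ := mul_pos hc hε
    have hcont1 : ContinuousOn (G (n+1)) (Icc a b) :=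
      fun x hx => (hchain (n+1) (by omega) x hx).continuousWithinAt
    have hgrow := growth_dichotomy' hc (hchain (n+1) (by omega)) hcont hlb
    have hgrowabs : ∀ x ∈ Icc a b, ∀ y ∈ Icc a b, x ≤ y →
        c * (y - x) ≤ |G (n+1) y - G (n+1) x| := by
      rcases hgrow with h | h
      · intro x hx y hy hxy; exact le_trans (h x hx y hy hxy) (le_abs_self _)
      · intro x hx y hy hxy
        refine le_trans (h x hx y hy hxy) ?_
        rw [abs_sub_comm]; exact le_abs_self _
    -- the middle strip
    have hJ : volume {x ∈ Icc a b | |G (n+1) x| < ρ} ≤ ENNReal.ofReal (2 * ε) := by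
      apply diam_volume' (by positivity)
      rintro x ⟨hx, hx2⟩ y ⟨hy, hy2⟩
      rw [Real.dist_eq]
      rcases le_total x y with hxy | hxy
      · have h1 := hgrowabs x hx y hy hxy
        have h2 : |G (n+1) y - G (n+1) x| ≤ |G (n+1) y| + |G (n+1) x| := abs_sub _ _
        have : c * (y - x) < 2 * (c * ε) := by linarith
        have hyx : y - x ≤ 2 * ε := by nlinarith
        rw [abs_sub_comm, abs_of_nonneg (by linarith : (0:ℝ) ≤ y - x)]
        linarith
      · have h1 := hgrowabs y hy x hx hxy
        have h2 : |G (n+1) x - G (n+1) y| ≤ |G (n+1) x| + |G (n+1) y| := abs_sub _ _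
        have : c * (x - y) < 2 * (c * ε) := by linarith
        have hyx : x - y ≤ 2 * ε := by nlinarith
        rw [abs_of_nonneg (by linarith : (0:ℝ) ≤ x - y)]
        linarith
    -- generic block estimate
    have hblock : ∀ S : Set ℝ, S ⊆ Icc a b → IsClosed S →
        (∀ p ∈ S, ∀ q ∈ S, ∀ x ∈ Icc p q, ρ ≤ |G (n+1) x|) →
        volume {x ∈ S | |G 0 x| < c * ε ^ (n+2)} ≤ ENNReal.ofReal (4 ^ (n+1) * ε) := by
      intro S hSsub hScl key
      rcases S.eq_empty_or_nonempty with hS | hS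
      · rw [hS]
        simp
      have hScp : IsCompact S := IsCompact.of_isClosed_subset isCompact_Icc hScl hSsub
      set a' := sInf S with ha'def
      set b' := sSup S with hb'def
      have ha' : a' ∈ S := hScp.sInf_mem hS
      have hb' : b' ∈ S := hScp.sSup_mem hS
      have hSsub' : S ⊆ Icc a' b' :=
        fun x hx => ⟨csInf_le hScp.bddBelow hx, le_csSup hScp.bddAbove hx⟩
      have hsub2 : Icc a' b' ⊆ Icc a b := Icc_subset_Icc (hSsub ha').1 (hSsub hb').2
      have hlb' : ∀ x ∈ Icc a' b', ρ ≤ |G (n+1) x| := key a' ha' b' hb'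
      have hvol := IH G a' b' ρ hρ
        (fun k hk x hx => (hchain k (by omega) x (hsub2 hx)).mono hsub2)
        (hcont1.mono hsub2) hlb' ε hε hε1
      refine le_trans (measure_mono ?_) hvol
      rintro x ⟨hxS, hx2⟩
      refine ⟨hSsub' hxS, ?_⟩
      calc |G 0 x| < c * ε ^ (n+2) := hx2
        _ = ρ * ε ^ (n+1) := by rw [hρdef]; ring
    -- the two lateral blocks
    set S := {x ∈ Icc a b | ρ ≤ G (n+1) x} with hSdef
    set T := {x ∈ Icc a b | G (n+1) x ≤ -ρ} with hTdef
    have hSsub : S ⊆ Icc a b := fun x hx => hx.1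
    have hTsub : T ⊆ Icc a b := fun x hx => hx.1
    have hScl : IsClosed S := by
      have : S = Icc a b ∩ (G (n+1)) ⁻¹' (Ici ρ) := rfl
      rw [this]
      exact hcont1.preimage_isClosed_of_isClosed isClosed_Icc isClosed_Ici
    have hTcl : IsClosed T := by
      have : T = Icc a b ∩ (G (n+1)) ⁻¹' (Iic (-ρ)) := rfl
      rw [this]
      exact hcont1.preimage_isClosed_of_isClosed isClosed_Icc isClosed_Iic
    have hSkey : ∀ p ∈ S, ∀ q ∈ S, ∀ x ∈ Icc p q, ρ ≤ |G (n+1) x| := by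
      rintro p ⟨hp, hpρ⟩ q ⟨hq, hqρ⟩ x hx
      have hxab : x ∈ Icc a b := ⟨le_trans hp.1 hx.1, le_trans hx.2 hq.2⟩
      rcases hgrow with h | h
      · have := h p hp x hxab hx.1
        have hge : ρ ≤ G (n+1) x := by nlinarith [mul_nonneg hc.le (sub_nonneg.2 hx.1)]
        exact le_trans hge (le_abs_self _)
      · have := h x hxab q hq hx.2
        have hge : ρ ≤ G (n+1) x := by nlinarith [mul_nonneg hc.le (sub_nonneg.2 hx.2)]
        exact le_trans hge (le_abs_self _)
    have hTkey : ∀ p ∈ T, ∀ q ∈ T, ∀ x ∈ Icc p q, ρ ≤ |G (n+1) x| := by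
      rintro p ⟨hp, hpρ⟩ q ⟨hq, hqρ⟩ x hx
      have hxab : x ∈ Icc a b := ⟨le_trans hp.1 hx.1, le_trans hx.2 hq.2⟩
      rcases hgrow with h | h
      · have := h x hxab q hq hx.2
        have hge : G (n+1) x ≤ -ρ := by nlinarith [mul_nonneg hc.le (sub_nonneg.2 hx.2)]
        calc ρ ≤ -(G (n+1) x) := by linarith
          _ ≤ |G (n+1) x| := neg_le_abs _
      · have := h p hp x hxab hx.1
        have hge : G (n+1) x ≤ -ρ := by nlinarith [mul_nonneg hc.le (sub_nonneg.2 hx.1)]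
        calc ρ ≤ -(G (n+1) x) := by linarith
          _ ≤ |G (n+1) x| := neg_le_abs _
    have hScover := hblock S hSsub hScl hSkey
    have hTcover := hblock T hTsub hTcl hTkey
    -- covering
    have hcover : {x ∈ Icc a b | |G 0 x| < c * ε ^ (n+1+1)} ⊆
        {x ∈ Icc a b | |G (n+1) x| < ρ} ∪
        ({x ∈ S | |G 0 x| < c * ε ^ (n+2)} ∪ {x ∈ T | |G 0 x| < c * ε ^ (n+2)}) := by
      rintro x ⟨hx, hx2⟩
      rcases lt_or_ge (|G (n+1) x|) ρ with h | h
      · exact Or.inl ⟨hx, h⟩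
      · rcases abs_cases (G (n+1) x) with ⟨he, _⟩ | ⟨he, _⟩
        · exact Or.inr (Or.inl ⟨⟨hx, by linarith⟩, hx2⟩)
        · exact Or.inr (Or.inr ⟨⟨hx, by linarith⟩, hx2⟩)
    calc volume {x ∈ Icc a b | |G 0 x| < c * ε ^ (n+1+1)}
        ≤ volume ({x ∈ Icc a b | |G (n+1) x| < ρ} ∪
          ({x ∈ S | |G 0 x| < c * ε ^ (n+2)} ∪ {x ∈ T | |G 0 x| < c * ε ^ (n+2)})) :=
          measure_mono hcover
      _ ≤ volume {x ∈ Icc a b | |G (n+1) x| < ρ} +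
          (volume {x ∈ S | |G 0 x| < c * ε ^ (n+2)} +
           volume {x ∈ T | |G 0 x| < c * ε ^ (n+2)}) :=
          le_trans (measure_union_le _ _) (by gcongr; exact measure_union_le _ _)
      _ ≤ ENNReal.ofReal (2 * ε) +
          (ENNReal.ofReal (4 ^ (n+1) * ε) + ENNReal.ofReal (4 ^ (n+1) * ε)) := by
          gcongr
      _ ≤ ENNReal.ofReal (4 ^ (n+1+1) * ε) := by
          rw [← ENNReal.ofReal_add (by positivity) (by positivity),
              ← ENNReal.ofReal_add (by positivity) (by positivity)]
          apply ENNReal.ofReal_le_ofReal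
          have h4 : (1:ℝ) ≤ 4 ^ (n+1) := one_le_pow₀ (by norm_num)
          have : (4:ℝ) ^ (n+1+1) = 4 * 4 ^ (n+1) := by ring
          nlinarith

/-- The Lebesgue measure of the neighbourhood `E_{λ,δ}` of the level sets is `O(δ)`. -/
theorem measure_level_set_nbhd
    (R : ℝ) (hR : 0 < R) (m : ℕ) (hm : 1 ≤ m) (v : ℝ → ℝ) (hv : GoodProfile R m v) :
    ∃ C₀ δ₀ : ℝ, 0 < C₀ ∧ 0 < δ₀ ∧
      ∀ lam : ℝ, ∀ δ ∈ Set.Ioc (0 : ℝ) δ₀,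
        volume (Eset R m v lam δ) ≤ ENNReal.ofReal (C₀ * δ) := by
  obtain ⟨hsm, hnz⟩ := hv
  set I := Set.Icc (0:ℝ) R with hIdef
  have hud : UniqueDiffOn ℝ I := uniqueDiffOn_Icc hR
  have h0I : (0:ℝ) ∈ I := ⟨le_refl 0, hR.le⟩
  set F : ℕ → ℝ → ℝ := fun k => iteratedDerivWithin k v I with hFdef
  have hF0 : F 0 = v := iteratedDerivWithin_zero
  have hFchain : ∀ k < m, ∀ x ∈ I, HasDerivWithinAt (F k) (F (k+1) x) I x := by
    intro k hk x hx
    have hdfo := hsm.differentiableOn_iteratedDerivWithin (m := k)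
      (by exact_mod_cast hk) hud
    have h1 := (hdfo x hx).hasDerivWithinAt
    have h2 : F (k+1) x = derivWithin (F k) I x := congrFun iteratedDerivWithin_succ x
    rw [h2]; exact h1
  have hFcont : ∀ k, k ≤ m → ContinuousOn (F k) I := fun k hk =>
    hsm.continuousOn_iteratedDerivWithin (by exact_mod_cast hk) hud
  have hIcp : IsCompact I := isCompact_Icc
  have hIne : I.Nonempty := ⟨0, h0I⟩
  have hφcont : ContinuousOn (fun r => ∑ n ∈ Finset.Icc 1 m, |F n r|) I :=
    continuousOn_finset_sum _ fun n hn => (hFcont n (Finset.mem_Icc.mp hn).2).abs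
  obtain ⟨r₀, hr₀I, hr₀min⟩ := hIcp.exists_isMinOn hIne hφcont
  set c := ∑ n ∈ Finset.Icc 1 m, |F n r₀| with hcdef
  have hc : 0 < c := by
    rcases (Finset.sum_nonneg fun i _ => abs_nonneg (F i r₀)).lt_or_eq with h | h
    · exact h
    · exact absurd h.symm (hnz r₀ hr₀I)
  have hmpos : (0:ℝ) < m := by exact_mod_cast Nat.lt_of_lt_of_le Nat.zero_lt_one hm
  set c₁ := c / (2 * m) with hc₁def
  have hc₁ : 0 < c₁ := by rw [hc₁def]; positivity
  have hpt : ∀ r ∈ I, ∃ n, 1 ≤ n ∧ n ≤ m ∧ c / m ≤ |F n r| := by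
    intro r hr
    by_contra hcon
    push_neg at hcon
    have hlt : ∑ n ∈ Finset.Icc 1 m, |F n r| < ∑ n ∈ Finset.Icc 1 m, c / m := by
      apply Finset.sum_lt_sum_of_nonempty (Finset.nonempty_Icc.2 hm)
      intro i hi
      rcases Finset.mem_Icc.mp hi with ⟨h1, h2⟩
      exact hcon i h1 h2
    have hsumconst : ∑ _n ∈ Finset.Icc 1 m, c / m = c := by
      rw [Finset.sum_const, Nat.card_Icc, Nat.add_sub_cancel, nsmul_eq_mul]
      field_simp
    have hminr : c ≤ ∑ n ∈ Finset.Icc 1 m, |F n r| := hr₀min hr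
    rw [hsumconst] at hlt
    linarith
  have hnbhd : ∀ r : ℝ, ∃ n d, 0 < d ∧ (r ∈ I → 1 ≤ n ∧ n ≤ m ∧
      ∀ x ∈ I, dist x r ≤ d → c₁ ≤ |F n x|) := by
    intro r
    by_cases hr : r ∈ I
    · obtain ⟨n, hn1, hnm, hnr⟩ := hpt r hr
      have hcw : ContinuousWithinAt (F n) I r := hFcont n hnm r hr
      rw [Metric.continuousWithinAt_iff] at hcw
      obtain ⟨d, hd, hdp⟩ := hcw c₁ hc₁
      refine ⟨n, d/2, by linarith, fun _ => ⟨hn1, hnm, ?_⟩⟩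
      intro x hx hxr
      have h1 := hdp hx (lt_of_le_of_lt hxr (by linarith))
      have h2 : |F n x - F n r| < c₁ := by rwa [Real.dist_eq] at h1
      have h3 : c / m = 2 * c₁ := by rw [hc₁def]; field_simp
      have h4 : |F n r| - |F n x| ≤ |F n x - F n r| := by
        rw [abs_sub_comm]; exact abs_sub_abs_le_abs_sub _ _
      linarith
    · exact ⟨1, 1, one_pos, fun h => absurd h hr⟩
  choose nf df hdf hprop using hnbhd
  obtain ⟨t, htI, hcover⟩ := hIcp.elim_nhds_subcover (fun r => Metric.ball r (df r))
    (fun r _ => Metric.ball_mem_nhds r (hdf r))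
  obtain ⟨K, hK⟩ := hIcp.exists_bound_of_continuousOn (hFcont 1 hm)
  have hK0 : 0 ≤ K := le_trans (norm_nonneg (F 1 0)) (hK 0 h0I)
  have hvdiff : DifferentiableOn ℝ v I := hsm.differentiableOn (by exact_mod_cast (by omega : m ≠ 0))
  have hLip : ∀ x ∈ I, ∀ y ∈ I, |v y - v x| ≤ K * |y - x| := by
    intro x hx y hy
    have := Convex.norm_image_sub_le_of_norm_derivWithin_le hvdiff
      (fun z hz => by
        rw [show derivWithin v I z = F 1 z from (congrFun iteratedDerivWithin_one z).symm]
        exact hK z hz) (convex_Icc 0 R) hx hy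
    simpa [Real.norm_eq_abs] using this
  set A := K + 1 with hAdef
  have hA : 0 < A := by rw [hAdef]; linarith
  set B := 1 + A / c₁ with hBdef
  have hB1 : 1 ≤ B := by
    rw [hBdef]
    have : 0 ≤ A / c₁ := by positivity
    linarith
  have hBpos : 0 < B := by linarith
  have hcB : A ≤ c₁ * B := by
    have : c₁ * B = c₁ + A := by rw [hBdef]; field_simp
    linarith
  refine ⟨(t.card + 1) * (4 ^ m * B), 1 / B, by positivity, by positivity, ?_⟩
  intro lam δ hδmem
  obtain ⟨hδ0, hδ₀⟩ := hδmem
  have hδ1 : δ ≤ 1 := le_trans hδ₀ (by rw [div_le_one hBpos]; exact hB1)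
  set ε := B * δ with hεdef
  have hε : 0 < ε := by rw [hεdef]; positivity
  have hε1 : ε ≤ 1 := by
    rw [hεdef]
    calc B * δ ≤ B * (1/B) := by gcongr
      _ = 1 := by field_simp
  have hEsub : Eset R m v lam δ ⊆ {x ∈ I | |v x - lam| < A * δ ^ m} := by
    rintro r ⟨hrI, hrd⟩
    obtain ⟨s, hs, hse⟩ := EMetric.infEdist_lt_iff.mp hrd
    obtain ⟨hsI, hsv⟩ := hs
    have hds : dist r s < δ ^ m := edist_lt_ofReal.mp hse
    refine ⟨hrI, ?_⟩
    have h1 : |v r - v s| ≤ K * |r - s| := hLip s hsI r hrI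
    have h2 : |r - s| ≤ δ ^ m := by rw [← Real.dist_eq]; exact hds.le
    have htri : |v r - lam| ≤ |v r - v s| + |v s - lam| := by
      have h : v r - lam = (v r - v s) + (v s - lam) := by ring
      rw [h]; exact abs_add_le _ _
    have hKb : K * |r - s| ≤ K * δ ^ m := mul_le_mul_of_nonneg_left h2 hK0
    calc |v r - lam| ≤ |v r - v s| + |v s - lam| := htri
      _ < K * δ^m + δ^m := by
          have := h1.trans hKb
          linarith
      _ = A * δ^m := by rw [hAdef]; ring
  set G : ℕ → ℝ → ℝ := fun k => if k = 0 then (fun x => v x - lam) else F k with hGdef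
  have hpiece : ∀ r ∈ t, volume ({x ∈ I | |v x - lam| < A * δ ^ m} ∩ Metric.ball r (df r))
      ≤ ENNReal.ofReal (4 ^ m * B * δ) := by
    intro r hrt
    obtain ⟨hn1, hnm, hbig⟩ := hprop r (htI r hrt)
    set n := nf r with hndef
    set d := df r with hddef
    set a' := max 0 (r - d) with ha'def
    set b' := min R (r + d) with hb'def
    have hsub : Set.Icc a' b' ⊆ I := Set.Icc_subset_Icc (le_max_left _ _) (min_le_left _ _)
    have hball : Metric.ball r d ∩ I ⊆ Set.Icc a' b' := by
      rintro x ⟨hxb, hxI⟩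
      rw [Metric.mem_ball, Real.dist_eq] at hxb
      rcases abs_lt.mp hxb with ⟨hb1, hb2⟩
      exact ⟨max_le hxI.1 (by linarith), le_min hxI.2 (by linarith)⟩
    have hlbn : ∀ x ∈ Set.Icc a' b', c₁ ≤ |F n x| := by
      intro x hx
      apply hbig x (hsub hx)
      rw [Real.dist_eq, abs_le]
      constructor
      · have h := le_max_right 0 (r - d)
        have := hx.1
        rw [ha'def] at this
        linarith
      · have h := min_le_right R (r + d)
        have := hx.2
        rw [hb'def] at this
        linarith
    obtain ⟨j, hj⟩ : ∃ j, n = j + 1 := ⟨n - 1, by omega⟩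
    have hchain : ∀ k < j + 1, ∀ x ∈ Set.Icc a' b',
        HasDerivWithinAt (G k) (G (k+1) x) (Set.Icc a' b') x := by
      intro k hk x hx
      have hkm : k < m := by omega
      have hx' := hsub hx
      rcases Nat.eq_zero_or_pos k with hk0 | hkpos
      · subst hk0
        have h1 := hFchain 0 (by omega) x hx'
        rw [hF0] at h1
        exact ((h1.sub_const lam).mono hsub)
      · obtain ⟨k', rfl⟩ : ∃ k', k = k' + 1 := ⟨k - 1, by omega⟩
        exact ((hFchain (k'+1) hkm x hx').mono hsub)
    have hcont' : ContinuousOn (G (j+1)) (Set.Icc a' b') := by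
      have : n ≤ m := hnm
      exact ((hFcont (j+1) (by omega)).mono hsub)
    have hlb' : ∀ x ∈ Set.Icc a' b', c₁ ≤ |G (j+1) x| := by
      intro x hx
      have h := hlbn x hx
      rw [hj] at h
      exact h
    have hvol := sublevel_lemma' j G a' b' c₁ hc₁ hchain hcont' hlb' ε hε hε1
    refine le_trans (measure_mono ?_) (le_trans hvol ?_)
    · rintro x ⟨⟨hxI, hxv⟩, hxb⟩
      refine ⟨hball ⟨hxb, hxI⟩, ?_⟩
      have hstep : A * δ ^ m ≤ c₁ * ε ^ (j+1) := by
        have hjm : j + 1 ≤ m := by omega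
        have h1 : δ ^ m ≤ δ ^ (j+1) := pow_le_pow_of_le_one hδ0.le hδ1 hjm
        have hBn : B ≤ B ^ (j+1) := by
          calc B = B ^ 1 := (pow_one B).symm
            _ ≤ B ^ (j+1) := pow_le_pow_right₀ hB1 (by omega)
        have hAc : A ≤ c₁ * B ^ (j+1) := by nlinarith
        calc A * δ ^ m ≤ A * δ ^ (j+1) := mul_le_mul_of_nonneg_left h1 hA.le
          _ ≤ (c₁ * B ^ (j+1)) * δ ^ (j+1) :=
              mul_le_mul_of_nonneg_right hAc (pow_nonneg hδ0.le _)
          _ = c₁ * ε ^ (j+1) := by rw [hεdef, mul_pow]; ring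
      calc |G 0 x| = |v x - lam| := rfl
        _ < A * δ ^ m := hxv
        _ ≤ _ := hstep
    · apply ENNReal.ofReal_le_ofReal
      have h4m : (4:ℝ) ^ (j+1) ≤ 4 ^ m := pow_le_pow_right₀ (by norm_num) (by omega)
      calc (4:ℝ) ^ (j+1) * ε = 4 ^ (j+1) * B * δ := by rw [hεdef]; ring
        _ ≤ 4 ^ m * B * δ := by gcongr
  have hcoverE : Eset R m v lam δ ⊆
      ⋃ r ∈ t, ({x ∈ I | |v x - lam| < A * δ ^ m} ∩ Metric.ball r (df r)) := by
    intro x hx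
    have hx' := hEsub hx
    have hxI : x ∈ I := hx'.1
    obtain ⟨r, hrt, hrb⟩ := Set.mem_iUnion₂.mp (hcover hxI)
    exact Set.mem_iUnion₂.mpr ⟨r, hrt, hx', hrb⟩
  calc volume (Eset R m v lam δ)
      ≤ ∑ r ∈ t, volume ({x ∈ I | |v x - lam| < A * δ ^ m} ∩ Metric.ball r (df r)) :=
        le_trans (measure_mono hcoverE) (measure_biUnion_finset_le _ _)
    _ ≤ ∑ _r ∈ t, ENNReal.ofReal (4 ^ m * B * δ) := Finset.sum_le_sum (fun r hr => hpiece r hr)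
    _ = t.card • ENNReal.ofReal (4 ^ m * B * δ) := by rw [Finset.sum_const]
    _ ≤ ENNReal.ofReal ((t.card + 1) * (4 ^ m * B) * δ) := by
        rw [nsmul_eq_mul, ← ENNReal.ofReal_natCast t.card,
          ← ENNReal.ofReal_mul (by positivity)]
        apply ENNReal.ofReal_le_ofReal
        have h4B : (0:ℝ) ≤ 4 ^ m * B * δ := by positivity
        nlinarith [h4B]

end
end

section
/- For every integer m ≥ 1 and every c > 0 there exists a constant C > 0 such that for all ν > 0 and t > 0 with ν t ≥ 1, one has ∫_{{k ∈ ℝ : |k| > ν}} e^{−c ν^{m/(m+2)} |k|^{2/(m+2)} t} dk ≤ C t^{−1} e^{−c ν t / 2}. -/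
open MeasureTheory Real Set

/-- The high-frequency integral estimate (3.4)--(3.6):
`∫_{|k| > ν} e^{-c ν^{m/(m+2)} |k|^{2/(m+2)} t} dk ≤ C t⁻¹ e^{-c ν t / 2}`. -/
theorem high_frequency_integral (m : ℕ) (hm : 1 ≤ m) (c : ℝ) (hc : 0 < c) :
    ∃ C : ℝ, 0 < C ∧
      ∀ ν t : ℝ, 0 < ν → 0 < t → 1 ≤ ν * t →
        (∫ k in {k : ℝ | ν < |k|},
            Real.exp (-(c * ν ^ ((m : ℝ) / (m + 2)) * |k| ^ ((2 : ℝ) / (m + 2)) * t))) ≤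
          C * t⁻¹ * Real.exp (-(c * ν * t / 2)) := by
  have hm2 : (0:ℝ) < (m:ℝ) + 2 := by positivity
  set β : ℝ := (2 : ℝ) / ((m:ℝ) + 2) with hβdef
  set α : ℝ := (m : ℝ) / ((m:ℝ) + 2) with hαdef
  have hβ : 0 < β := by positivity
  have hα0 : 0 ≤ α := by positivity
  have hne : ((m:ℝ) + 2) ≠ 0 := ne_of_gt hm2
  have hαβ : α + β = 1 := by rw [hαdef, hβdef]; field_simp
  have hGam : 0 < Real.Gamma (1/β + 1) := Real.Gamma_pos_of_pos (by positivity)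
  refine ⟨2 * Real.Gamma (1/β + 1) * (2/c) ^ (1/β), by positivity, ?_⟩
  intro ν t hν ht hνt
  set A : ℝ := c * ν ^ α * t / 2 with hA
  have hA0 : 0 < A := by positivity
  -- Integrability on `Ioi 0`
  have hIoi : IntegrableOn (fun x : ℝ => Real.exp (-(A * x ^ β))) (Ioi 0) := by
    have hp : (1/β) ≠ 0 := by positivity
    rw [← integrableOn_Ioi_comp_rpow_iff _ hp]
    have h1 : IntegrableOn (fun x : ℝ => x ^ (1/β - 1) * Real.exp (-A * x ^ (1:ℝ))) (Ioi 0) :=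
      integrableOn_rpow_mul_exp_neg_mul_rpow (by simpa using (by positivity : (0:ℝ) < 1/β)) zero_lt_one hA0
    have h2 : IntegrableOn (fun x : ℝ => 1/β * (x ^ (1/β - 1) * Real.exp (-A * x ^ (1:ℝ)))) (Ioi 0) :=
      h1.const_mul (1/β)
    refine h2.congr_fun (fun x hx => ?_) measurableSet_Ioi
    have hx0 : (0:ℝ) < x := hx
    have hxp : (x ^ (1/β)) ^ β = x := by
      rw [← Real.rpow_mul hx0.le, one_div_mul_cancel hβ.ne', Real.rpow_one]
    beta_reduce
    rw [smul_eq_mul, hxp, abs_of_pos (by positivity : (0:ℝ) < 1/β), Real.rpow_one, neg_mul]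
    ring
  have hIoi' : IntegrableOn (fun k : ℝ => Real.exp (-(A * |k| ^ β))) (Ioi 0) :=
    hIoi.congr_fun (fun x hx => by rw [abs_of_pos (show (0:ℝ) < x from hx)]) measurableSet_Ioi
  have hIic : IntegrableOn (fun k : ℝ => Real.exp (-(A * |k| ^ β))) (Iic 0) := by
    rw [← Measure.map_neg_eq_self (volume : Measure ℝ)]
    have hme : MeasurableEmbedding fun x : ℝ => -x := (Homeomorph.neg ℝ).measurableEmbedding
    rw [hme.integrableOn_map_iff]
    simp_rw [Function.comp_def, abs_neg, neg_preimage, neg_Iic, neg_zero]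
    exact Iff.mpr integrableOn_Ici_iff_integrableOn_Ioi hIoi'
  have hint : Integrable (fun k : ℝ => Real.exp (-(A * |k| ^ β))) := by
    have := hIic.union hIoi'
    rwa [Iic_union_Ioi, integrableOn_univ] at this
  have hmeas : MeasurableSet {k : ℝ | ν < |k|} :=
    measurableSet_lt measurable_const measurable_abs
  -- key pointwise bound
  have key : ∀ k : ℝ, ν < |k| →
      Real.exp (-(c * ν ^ α * |k| ^ β * t)) ≤
        Real.exp (-(c * ν * t / 2)) * Real.exp (-(A * |k| ^ β)) := by
    intro k hk
    rw [← Real.exp_add, Real.exp_le_exp]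
    have h1 : ν ^ β ≤ |k| ^ β := Real.rpow_le_rpow hν.le hk.le hβ.le
    have h2 : ν ^ α * ν ^ β = ν := by
      rw [← Real.rpow_add hν, hαβ, Real.rpow_one]
    have h3 : ν ≤ ν ^ α * |k| ^ β := by
      calc ν = ν ^ α * ν ^ β := h2.symm
        _ ≤ ν ^ α * |k| ^ β := mul_le_mul_of_nonneg_left h1 (by positivity)
    have h4 : 0 ≤ c * t / 2 := by positivity
    rw [hA]
    nlinarith [mul_le_mul_of_nonneg_left h3 h4]
  -- the bound on A priors
  have h1inv : 1/β = ((m:ℝ) + 2)/2 := by rw [hβdef, one_div_div]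
  have hαβ2 : α * (1/β) = (m:ℝ)/2 := by
    rw [hαdef, h1inv]; field_simp [hne]
  have h1β : 1/β = (m:ℝ)/2 + 1 := by rw [h1inv]; ring
  have hνt1 : (1:ℝ) ≤ (ν*t) ^ ((m:ℝ)/2) := Real.one_le_rpow hνt (by positivity)
  have hAeq : A ^ (1/β) = (c/2) ^ (1/β) * ((ν*t) ^ ((m:ℝ)/2) * t) := by
    have e1 : A = (c/2) * (ν ^ α * t) := by rw [hA]; ring
    rw [e1, Real.mul_rpow (by positivity) (by positivity),
      Real.mul_rpow (by positivity) ht.le, ← Real.rpow_mul hν.le, hαβ2,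
      Real.mul_rpow hν.le ht.le]
    rw [h1β, Real.rpow_add ht, Real.rpow_one]
    ring
  have hApow : (c/2) ^ (1/β) * t ≤ A ^ (1/β) := by
    rw [hAeq]
    have h5 : (0:ℝ) ≤ (c/2) ^ (1/β) := by positivity
    have h6 : t ≤ (ν*t) ^ ((m:ℝ)/2) * t := le_mul_of_one_le_left ht.le hνt1
    exact mul_le_mul_of_nonneg_left h6 h5
  have hAb : A ^ (-1/β) ≤ (2/c) ^ (1/β) * t⁻¹ := by
    have hpos : (0:ℝ) < (c/2) ^ (1/β) * t := by positivity
    have hinv : (A ^ (1/β))⁻¹ ≤ ((c/2) ^ (1/β) * t)⁻¹ :=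
      inv_anti₀ hpos hApow
    have heq : ((c/2) ^ (1/β) * t)⁻¹ = (2/c) ^ (1/β) * t⁻¹ := by
      rw [mul_inv, ← Real.inv_rpow (by positivity), inv_div]
    rw [heq] at hinv
    rw [neg_div, Real.rpow_neg hA0.le]
    exact hinv
  calc
    (∫ k in {k : ℝ | ν < |k|}, Real.exp (-(c * ν ^ α * |k| ^ β * t)))
        = ∫ k, ({k : ℝ | ν < |k|}).indicator
            (fun k => Real.exp (-(c * ν ^ α * |k| ^ β * t))) k :=
          (integral_indicator hmeas).symm
    _ ≤ ∫ k, Real.exp (-(c * ν * t / 2)) * Real.exp (-(A * |k| ^ β)) := by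
        apply integral_mono_of_nonneg
        · exact Filter.Eventually.of_forall fun k =>
            Set.indicator_nonneg (fun _ _ => (Real.exp_pos _).le) _
        · exact hint.const_mul _
        · refine Filter.Eventually.of_forall fun k => ?_
          by_cases hk : ν < |k|
          · rw [Set.indicator_of_mem (by exact hk)]
            exact key k hk
          · rw [Set.indicator_of_notMem (by exact hk)]
            positivity
    _ = Real.exp (-(c * ν * t / 2)) * (2 * ∫ x in Ioi (0:ℝ), Real.exp (-(A * x ^ β))) := by
        rw [integral_const_mul, integral_comp_abs (f := fun x => Real.exp (-(A * x ^ β)))]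
    _ = Real.exp (-(c * ν * t / 2)) * (2 * (A ^ (-1/β) * Real.Gamma (1/β + 1))) := by
        congr 2
        simp_rw [neg_mul_eq_neg_mul]
        rw [integral_exp_neg_mul_rpow hβ hA0]
    _ ≤ 2 * Real.Gamma (1/β + 1) * (2/c) ^ (1/β) * t⁻¹ * Real.exp (-(c * ν * t / 2)) := by
        rw [show 2 * Real.Gamma (1/β + 1) * (2/c) ^ (1/β) * t⁻¹ * Real.exp (-(c * ν * t / 2))
            = Real.exp (-(c * ν * t / 2)) * (2 * ((2/c) ^ (1/β) * t⁻¹ * Real.Gamma (1/β + 1)))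
            from by ring]
        gcongr
end

section
/- Let R > 0, let m ≥ 1 be an integer, and let v : [0,R] → ℝ satisfy Assumption 1.1. Then for every λ ∈ ℝ, the level set E_λ = { r ∈ [0,R] : v(r) = λ } is finite. -/
open Topology Filter


/-- Under Assumption 1.1, every level set `E_λ = v⁻¹(λ) ∩ [0,R]` is finite. -/
theorem level_set_finite
    (R : ℝ) (hR : 0 < R) (m : ℕ) (hm : 1 ≤ m) (v : ℝ → ℝ) (hv : GoodProfile R m v)
    (lam : ℝ) :
    {r ∈ Set.Icc (0 : ℝ) R | v r = lam}.Finite := by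
  by_contra hfin
  rw [← Set.not_infinite, not_not] at hfin
  set I := Set.Icc (0 : ℝ) R with hI
  have hud : UniqueDiffOn ℝ I := uniqueDiffOn_Icc hR
  -- accumulation point
  obtain ⟨r₀, hr₀K, hacc⟩ := hfin.exists_accPt_of_subset_isCompact isCompact_Icc
    (fun x hx => hx.1)
  rw [accPt_iff_nhds] at hacc
  set g : ℕ → ℝ → ℝ := fun n => iteratedDerivWithin n v I with hg
  have hgcont : ∀ n ≤ m, ContinuousOn (g n) I := fun n hn =>
    hv.1.continuousOn_iteratedDerivWithin (by exact_mod_cast hn) hud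
  -- limit value lemma
  have hlim : ∀ n ≤ m, ∀ c : ℝ,
      (∀ ε > 0, ∃ x ∈ I, x ≠ r₀ ∧ |x - r₀| < ε ∧ g n x = c) → g n r₀ = c := by
    intro n hn c hc
    have hcl : IsClosed {x | x ∈ I ∧ g n x = c} := by
      have : {x | x ∈ I ∧ g n x = c} = I ∩ (g n) ⁻¹' {c} := rfl
      rw [this]
      exact (hgcont n hn).preimage_isClosed_of_isClosed isClosed_Icc isClosed_singleton
    have hmem : r₀ ∈ {x | x ∈ I ∧ g n x = c} := by
      rw [← hcl.closure_eq]
      rw [Metric.mem_closure_iff]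
      intro ε hε
      obtain ⟨x, hxI, _, hxd, hxc⟩ := hc ε hε
      exact ⟨x, ⟨hxI, hxc⟩, by rwa [Real.dist_eq, abs_sub_comm]⟩
    exact hmem.2
  -- main induction
  have key : ∀ n, n ≤ m → ∃ c : ℝ, (1 ≤ n → c = 0) ∧
      ∀ ε > 0, ∃ x ∈ I, x ≠ r₀ ∧ |x - r₀| < ε ∧ g n x = c := by
    intro n
    induction n with
    | zero =>
      intro _
      refine ⟨lam, by omega, fun ε hε => ?_⟩
      obtain ⟨y, ⟨hyU, hyS⟩, hyne⟩ := hacc (Metric.ball r₀ ε) (Metric.ball_mem_nhds _ hε)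
      exact ⟨y, hyS.1, hyne, by simpa [Real.dist_eq] using hyU, by
        simpa [hg, iteratedDerivWithin_zero] using hyS.2⟩
    | succ n ih =>
      intro hn1
      obtain ⟨c, _, hc⟩ := ih (le_trans (Nat.le_succ n) hn1)
      have hgr₀ : g n r₀ = c := hlim n (le_trans (Nat.le_succ n) hn1) c hc
      refine ⟨0, fun _ => rfl, fun ε hε => ?_⟩
      obtain ⟨x, hxI, hxne, hxd, hxc⟩ := hc ε hε
      -- Rolle between x and r₀
      have hkey : ∀ a b : ℝ, a < b → a ∈ I → b ∈ I → g n a = g n b →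
          a = x ∨ a = r₀ → b = x ∨ b = r₀ →
          ∃ y ∈ I, y ≠ r₀ ∧ |y - r₀| < ε ∧ g (n + 1) y = 0 := by
        intro a b hab haI hbI heq hax hbx
        obtain ⟨y, hy, hdy⟩ := exists_deriv_eq_zero hab
          ((hgcont n (le_trans (Nat.le_succ n) hn1)).mono
            (Set.Icc_subset_Icc haI.1 hbI.2)) heq
        have hyI : y ∈ Set.Ioo (0 : ℝ) R :=
          ⟨lt_of_le_of_lt haI.1 hy.1, lt_of_lt_of_le hy.2 hbI.2⟩
        have hynhds : I ∈ 𝓝 y := Icc_mem_nhds hyI.1 hyI.2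
        refine ⟨y, Set.Ioo_subset_Icc_self hyI, ?_, ?_, ?_⟩
        · intro hyr
          rcases hax with rfl | rfl
          · rcases hbx with rfl | rfl
            · exact absurd hab (lt_irrefl _)
            · exact absurd hy.2 (by rw [hyr]; exact lt_irrefl _)
          · exact absurd hy.1 (by rw [hyr]; exact lt_irrefl _)
        · -- y strictly between a and b, both within ε of r₀
          have ha' : |a - r₀| < ε ∨ a = r₀ := by
            rcases hax with rfl | rfl
            · exact Or.inl hxd
            · exact Or.inr rfl
          have hb' : |b - r₀| < ε ∨ b = r₀ := by
            rcases hbx with rfl | rfl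
            · exact Or.inl hxd
            · exact Or.inr rfl
          rw [abs_sub_lt_iff]
          constructor
          · rcases hb' with h | rfl
            · have := (abs_sub_lt_iff.mp h).1
              linarith [hy.2]
            · linarith [hy.2]
          · rcases ha' with h | rfl
            · have := (abs_sub_lt_iff.mp h).2
              linarith [hy.1]
            · linarith [hy.1]
        · have : g (n + 1) y = derivWithin (g n) I y :=
            congrFun iteratedDerivWithin_succ y
          rw [this, derivWithin_of_mem_nhds hynhds, hdy]
      rcases lt_trichotomy x r₀ with h | h | h
      · exact hkey x r₀ h hxI hr₀K (hxc.trans hgr₀.symm) (Or.inl rfl) (Or.inr rfl)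
      · exact absurd h hxne
      · exact hkey r₀ x h hr₀K hxI (hgr₀.trans hxc.symm) (Or.inr rfl) (Or.inl rfl)
  -- conclude: all derivatives 1..m vanish at r₀
  have hzero : ∀ n ∈ Finset.Icc 1 m, |g n r₀| = 0 := by
    intro n hn
    rw [Finset.mem_Icc] at hn
    obtain ⟨c, hc0, hc⟩ := key n hn.2
    rw [abs_eq_zero]
    have := hlim n hn.2 c hc
    rw [this, hc0 hn.1]
  have := hv.2 r₀ hr₀K
  exact this (Finset.sum_eq_zero hzero)
end
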